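/- (Convex combinations of user equilibria with the same support.) Let A ∈ ℝ^{m×n}, α ∈ ℝ^m with α ≥ 0 componentwise, β ∈ ℝ^m, and for Π ∈ ℝ^n define f_Π(x) := (1/2)·xᵀAᵀdiag(α)Ax + (Aᵀβ + Π)ᵀx on the simplex Δ := {x ∈ ℝ^n : x ≥ 0, 1ᵀx = 1}. Suppose x₁ minimizes f_{Π₁} over Δ, x₂ minimizes f_{Π₂} over Δ, and {r : (x₁)_r = 0} = {r : (x₂)_r = 0}. Then for every t ∈ [0,1], the point x_t := t·x₁ + (1−t)·x₂ minimizes f_{Π_t} over Δ, where Π_t := t·Π₁ + (1−t)·Π₂. If moreover Aᵀdiag(α)A is positive definite, then x_t is the unique minimizer of f_{Π_t} over Δ. -/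

import Mathlib

open Matrix

lemma UEaux_B {m n : ℕ} (A : Matrix (Fin m) (Fin n) ℝ) (α : Fin m → ℝ)
    (x y : Fin n → ℝ) :
    x ⬝ᵥ (Aᵀ * Matrix.diagonal α * A) *ᵥ y
      = ∑ i, α i * ((A *ᵥ x) i * (A *ᵥ y) i) := by
  rw [← mulVec_mulVec, ← mulVec_mulVec, dotProduct_mulVec, vecMul_transpose]
  simp [dotProduct, mulVec_diagonal, mul_comm, mul_left_comm]

lemma UEaux_symm {m n : ℕ} (A : Matrix (Fin m) (Fin n) ℝ) (α : Fin m → ℝ)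
    (x y : Fin n → ℝ) :
    x ⬝ᵥ (Aᵀ * Matrix.diagonal α * A) *ᵥ y = y ⬝ᵥ (Aᵀ * Matrix.diagonal α * A) *ᵥ x := by
  rw [UEaux_B, UEaux_B]; exact Finset.sum_congr rfl fun i _ => by ring

lemma UEaux_pos {m n : ℕ} (A : Matrix (Fin m) (Fin n) ℝ) (α : Fin m → ℝ)
    (hα : ∀ i, 0 ≤ α i) (x : Fin n → ℝ) :
    0 ≤ x ⬝ᵥ (Aᵀ * Matrix.diagonal α * A) *ᵥ x := by
  rw [UEaux_B]
  exact Finset.sum_nonneg fun i _ => mul_nonneg (hα i) (mul_self_nonneg _)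

/-- Expansion of the quadratic function along a segment. -/
lemma UEaux_expand {n : ℕ} (Q : Matrix (Fin n) (Fin n) ℝ)
    (hsym : ∀ u v : Fin n → ℝ, u ⬝ᵥ Q *ᵥ v = v ⬝ᵥ Q *ᵥ u)
    (c x d : Fin n → ℝ) (s : ℝ) :
    (1/2) * ((x + s • d) ⬝ᵥ Q *ᵥ (x + s • d)) + c ⬝ᵥ (x + s • d)
      = ((1/2) * (x ⬝ᵥ Q *ᵥ x) + c ⬝ᵥ x)
        + s * ((Q *ᵥ x + c) ⬝ᵥ d) + s^2/2 * (d ⬝ᵥ Q *ᵥ d) := by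
  have h1 : (Q *ᵥ x) ⬝ᵥ d = x ⬝ᵥ Q *ᵥ d := by
    rw [dotProduct_comm, hsym]
  simp only [mulVec_add, mulVec_smul, dotProduct_add, add_dotProduct,
    dotProduct_smul, smul_dotProduct, smul_eq_mul, h1, hsym d x]
  ring

/-- Variational inequality: a minimizer of the quadratic over the simplex satisfies
`g ⬝ᵥ x ≤ g ⬝ᵥ y` for the gradient `g = Q *ᵥ x + c` and every simplex point `y`. -/
lemma UEaux_VI {n : ℕ} (Q : Matrix (Fin n) (Fin n) ℝ)
    (hsym : ∀ u v : Fin n → ℝ, u ⬝ᵥ Q *ᵥ v = v ⬝ᵥ Q *ᵥ u)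
    (hpos : ∀ v, 0 ≤ v ⬝ᵥ Q *ᵥ v)
    (c x : Fin n → ℝ)
    (hx0 : ∀ r, 0 ≤ x r) (hx1 : ∑ r, x r = 1)
    (hmin : ∀ y : Fin n → ℝ, (∀ r, 0 ≤ y r) → ∑ r, y r = 1 →
      (1/2) * (x ⬝ᵥ Q *ᵥ x) + c ⬝ᵥ x ≤ (1/2) * (y ⬝ᵥ Q *ᵥ y) + c ⬝ᵥ y)
    (y : Fin n → ℝ) (hy0 : ∀ r, 0 ≤ y r) (hy1 : ∑ r, y r = 1) :
    (Q *ᵥ x + c) ⬝ᵥ x ≤ (Q *ᵥ x + c) ⬝ᵥ y := by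
  set d : Fin n → ℝ := y - x with hd
  set g : Fin n → ℝ := Q *ᵥ x + c with hg
  set q : ℝ := d ⬝ᵥ Q *ᵥ d with hq
  have hq0 : 0 ≤ q := hpos d
  have key : ∀ s : ℝ, 0 < s → s ≤ 1 → 0 ≤ s * (g ⬝ᵥ d) + s^2/2 * q := by
    intro s hs hs1
    have hz0 : ∀ r, 0 ≤ (x + s • d) r := by
      intro r
      have e : (x + s • d) r = (1 - s) * x r + s * y r := by
        simp [hd]; ring
      rw [e]
      exact add_nonneg (mul_nonneg (by linarith) (hx0 r)) (mul_nonneg hs.le (hy0 r))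
    have hz1 : ∑ r, (x + s • d) r = 1 := by
      have e : ∀ r, (x + s • d) r = x r + s * (y r - x r) := by
        intro r; simp [hd]
      simp only [e]
      rw [Finset.sum_add_distrib, ← Finset.mul_sum, Finset.sum_sub_distrib, hx1, hy1]
      ring
    have h := hmin (x + s • d) hz0 hz1
    rw [UEaux_expand Q hsym c x d s] at h
    linarith
  have goal0 : 0 ≤ g ⬝ᵥ d := by
    by_contra h
    push_neg at h
    rcases eq_or_lt_of_le hq0 with hq0' | hq0'
    · have := key 1 one_pos le_rfl
      rw [← hq0'] at this
      nlinarith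
    · set s : ℝ := min 1 (-(g ⬝ᵥ d) / q) with hs
      have hs0 : 0 < s := lt_min one_pos (div_pos (by linarith) hq0')
      have hs1 : s ≤ 1 := min_le_left _ _
      have hs2 : s * q ≤ -(g ⬝ᵥ d) := by
        have := min_le_right 1 (-(g ⬝ᵥ d) / q)
        calc s * q ≤ (-(g ⬝ᵥ d) / q) * q := by nlinarith
          _ = -(g ⬝ᵥ d) := by field_simp
      have := key s hs0 hs1
      nlinarith
  have : g ⬝ᵥ d = g ⬝ᵥ y - g ⬝ᵥ x := by rw [hd, dotProduct_sub]
  linarith [goal0.trans_eq this]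

/-- Convex combinations of user equilibria with the same support: if `x₁` minimizes
`f_{P₁}` and `x₂` minimizes `f_{P₂}` over the simplex and they have the same set of zero
coordinates, then `t x₁ + (1−t) x₂` minimizes `f_{t P₁ + (1−t) P₂}`; it is moreover the
unique minimizer when `Aᵀ diag(α) A` is positive definite. -/
theorem UE_convex_combination {m n : ℕ}
    (A : Matrix (Fin m) (Fin n) ℝ)
    (α : Fin m → ℝ) (hα : ∀ i, 0 ≤ α i) (β : Fin m → ℝ)
    (P₁ P₂ : Fin n → ℝ) (x₁ x₂ : Fin n → ℝ) :
    let f : (Fin n → ℝ) → (Fin n → ℝ) → ℝ := fun P x =>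
      (1 / 2) * (x ⬝ᵥ (Aᵀ * Matrix.diagonal α * A).mulVec x) + (Aᵀ.mulVec β + P) ⬝ᵥ x
    let simplex : (Fin n → ℝ) → Prop := fun x => (∀ r, 0 ≤ x r) ∧ (∑ r, x r) = 1
    simplex x₁ → (∀ y, simplex y → f P₁ x₁ ≤ f P₁ y) →
    simplex x₂ → (∀ y, simplex y → f P₂ x₂ ≤ f P₂ y) →
    (∀ r, x₁ r = 0 ↔ x₂ r = 0) →
    ∀ t : ℝ, 0 ≤ t → t ≤ 1 →
      (simplex (t • x₁ + (1 - t) • x₂) ∧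
        (∀ y, simplex y →
          f (t • P₁ + (1 - t) • P₂) (t • x₁ + (1 - t) • x₂) ≤
            f (t • P₁ + (1 - t) • P₂) y)) ∧
      ((Aᵀ * Matrix.diagonal α * A).PosDef →
        ∀ y, simplex y →
          (∀ z, simplex z → f (t • P₁ + (1 - t) • P₂) y ≤ f (t • P₁ + (1 - t) • P₂) z) →
          y = t • x₁ + (1 - t) • x₂) := by
  intro f simplex hx₁ hmin₁ hx₂ hmin₂ hsupp t ht0 ht1
  set Q : Matrix (Fin n) (Fin n) ℝ := Aᵀ * Matrix.diagonal α * A with hQ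
  have hsym := UEaux_symm A α
  have hpos := UEaux_pos A α hα
  have hf : ∀ P y : Fin n → ℝ, f P y = (1/2) * (y ⬝ᵥ Q *ᵥ y) + (Aᵀ *ᵥ β + P) ⬝ᵥ y :=
    fun _ _ => rfl
  -- gradients
  set g₁ : Fin n → ℝ := Q *ᵥ x₁ + (Aᵀ *ᵥ β + P₁) with hg₁
  set g₂ : Fin n → ℝ := Q *ᵥ x₂ + (Aᵀ *ᵥ β + P₂) with hg₂
  set m₁ : ℝ := g₁ ⬝ᵥ x₁ with hm₁
  set m₂ : ℝ := g₂ ⬝ᵥ x₂ with hm₂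
  have hVI₁ : ∀ y : Fin n → ℝ, (∀ r, 0 ≤ y r) → ∑ r, y r = 1 → m₁ ≤ g₁ ⬝ᵥ y := by
    intro y hy0 hy1
    exact UEaux_VI Q hsym hpos _ x₁ hx₁.1 hx₁.2
      (fun z hz0 hz1 => by simpa [hf] using hmin₁ z ⟨hz0, hz1⟩) y hy0 hy1
  have hVI₂ : ∀ y : Fin n → ℝ, (∀ r, 0 ≤ y r) → ∑ r, y r = 1 → m₂ ≤ g₂ ⬝ᵥ y := by
    intro y hy0 hy1
    exact UEaux_VI Q hsym hpos _ x₂ hx₂.1 hx₂.2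
      (fun z hz0 hz1 => by simpa [hf] using hmin₂ z ⟨hz0, hz1⟩) y hy0 hy1
  -- pointwise gradient bounds
  have hsingle : ∀ r : Fin n, (∀ r', 0 ≤ (Pi.single r 1 : Fin n → ℝ) r') ∧
      ∑ r', (Pi.single r 1 : Fin n → ℝ) r' = 1 := by
    intro r
    constructor
    · intro r'; by_cases h : r' = r <;> simp [Pi.single_apply, h]
    · simp
  have hg₁r : ∀ r, m₁ ≤ g₁ r := by
    intro r
    have := hVI₁ ((Pi.single r 1 : Fin n → ℝ)) (hsingle r).1 (hsingle r).2
    simpa using this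
  have hg₂r : ∀ r, m₂ ≤ g₂ r := by
    intro r
    have := hVI₂ ((Pi.single r 1 : Fin n → ℝ)) (hsingle r).1 (hsingle r).2
    simpa using this
  -- gradient is constant on the support
  have hsupp₁ : ∀ r, x₁ r ≠ 0 → g₁ r = m₁ := by
    intro r hr
    have hsum : ∑ r', x₁ r' * (g₁ r' - m₁) = 0 := by
      have e : ∑ r', x₁ r' * (g₁ r' - m₁)
          = (∑ r', x₁ r' * g₁ r') - (∑ r', x₁ r') * m₁ := by
        simp [mul_sub, Finset.sum_sub_distrib, Finset.sum_mul]
      rw [e, hx₁.2]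
      have : (∑ r', x₁ r' * g₁ r') = m₁ := by
        rw [hm₁]; simp [dotProduct, mul_comm]
      rw [this]; ring
    have hnn : ∀ r' ∈ Finset.univ, (0:ℝ) ≤ x₁ r' * (g₁ r' - m₁) :=
      fun r' _ => mul_nonneg (hx₁.1 r') (sub_nonneg.mpr (hg₁r r'))
    have := (Finset.sum_eq_zero_iff_of_nonneg hnn).mp hsum r (Finset.mem_univ r)
    rcases mul_eq_zero.mp this with h | h
    · exact absurd h hr
    · linarith [sub_eq_zero.mp h]
  have hsupp₂ : ∀ r, x₂ r ≠ 0 → g₂ r = m₂ := by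
    intro r hr
    have hsum : ∑ r', x₂ r' * (g₂ r' - m₂) = 0 := by
      have e : ∑ r', x₂ r' * (g₂ r' - m₂)
          = (∑ r', x₂ r' * g₂ r') - (∑ r', x₂ r') * m₂ := by
        simp [mul_sub, Finset.sum_sub_distrib, Finset.sum_mul]
      rw [e, hx₂.2]
      have : (∑ r', x₂ r' * g₂ r') = m₂ := by
        rw [hm₂]; simp [dotProduct, mul_comm]
      rw [this]; ring
    have hnn : ∀ r' ∈ Finset.univ, (0:ℝ) ≤ x₂ r' * (g₂ r' - m₂) :=
      fun r' _ => mul_nonneg (hx₂.1 r') (sub_nonneg.mpr (hg₂r r'))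
    have := (Finset.sum_eq_zero_iff_of_nonneg hnn).mp hsum r (Finset.mem_univ r)
    rcases mul_eq_zero.mp this with h | h
    · exact absurd h hr
    · linarith [sub_eq_zero.mp h]
  -- cross dot products
  have hg₁x₂ : g₁ ⬝ᵥ x₂ = m₁ := by
    have e : g₁ ⬝ᵥ x₂ = ∑ r, g₁ r * x₂ r := rfl
    rw [e]
    have : ∀ r ∈ Finset.univ, g₁ r * x₂ r = m₁ * x₂ r := by
      intro r _
      by_cases h : x₂ r = 0
      · simp [h]
      · have hx1r : x₁ r ≠ 0 := fun h1 => h ((hsupp r).mp h1)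
        rw [hsupp₁ r hx1r]
    rw [Finset.sum_congr rfl this, ← Finset.mul_sum, hx₂.2, mul_one]
  have hg₂x₁ : g₂ ⬝ᵥ x₁ = m₂ := by
    have e : g₂ ⬝ᵥ x₁ = ∑ r, g₂ r * x₁ r := rfl
    rw [e]
    have : ∀ r ∈ Finset.univ, g₂ r * x₁ r = m₂ * x₁ r := by
      intro r _
      by_cases h : x₁ r = 0
      · simp [h]
      · have hx2r : x₂ r ≠ 0 := fun h2 => h ((hsupp r).mpr h2)
        rw [hsupp₂ r hx2r]
    rw [Finset.sum_congr rfl this, ← Finset.mul_sum, hx₁.2, mul_one]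
  -- the combined point
  set xt : Fin n → ℝ := t • x₁ + (1 - t) • x₂ with hxt
  set Pt : Fin n → ℝ := t • P₁ + (1 - t) • P₂ with hPt
  set gt : Fin n → ℝ := Q *ᵥ xt + (Aᵀ *ᵥ β + Pt) with hgt
  have hgtcomb : gt = t • g₁ + (1 - t) • g₂ := by
    funext r
    simp only [hgt, hg₁, hg₂, hxt, hPt, Matrix.mulVec_add, Matrix.mulVec_smul,
      Pi.add_apply, Pi.smul_apply, smul_eq_mul]
    ring
  set mt : ℝ := t * m₁ + (1 - t) * m₂ with hmt
  have hxtΔ : simplex xt := by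
    constructor
    · intro r
      have : xt r = t * x₁ r + (1 - t) * x₂ r := rfl
      rw [this]
      exact add_nonneg (mul_nonneg ht0 (hx₁.1 r)) (mul_nonneg (by linarith) (hx₂.1 r))
    · have e : ∀ r, xt r = t * x₁ r + (1 - t) * x₂ r := fun r => rfl
      simp only [e]
      rw [Finset.sum_add_distrib, ← Finset.mul_sum, ← Finset.mul_sum, hx₁.2, hx₂.2]
      ring
  have hgtxt : gt ⬝ᵥ xt = mt := by
    have e : gt ⬝ᵥ xt = t * (g₁ ⬝ᵥ xt) + (1 - t) * (g₂ ⬝ᵥ xt) := by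
      rw [hgtcomb, add_dotProduct, smul_dotProduct, smul_dotProduct, smul_eq_mul, smul_eq_mul]
    have e1 : g₁ ⬝ᵥ xt = m₁ := by
      rw [hxt, dotProduct_add, dotProduct_smul, dotProduct_smul, smul_eq_mul, smul_eq_mul,
        hg₁x₂, ← hm₁]
      ring
    have e2 : g₂ ⬝ᵥ xt = m₂ := by
      rw [hxt, dotProduct_add, dotProduct_smul, dotProduct_smul, smul_eq_mul, smul_eq_mul,
        hg₂x₁, ← hm₂]
      ring
    rw [e, e1, e2, hmt]
  have hgtr : ∀ r, mt ≤ gt r := by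
    intro r
    have : gt r = t * g₁ r + (1 - t) * g₂ r := by
      rw [hgtcomb]; simp [smul_eq_mul]
    rw [this, hmt]
    have h1 := hg₁r r
    have h2 := hg₂r r
    nlinarith
  -- minimality of xt
  have hminxt : ∀ y, simplex y → f Pt xt ≤ f Pt y := by
    intro y hy
    have hVIy : gt ⬝ᵥ xt ≤ gt ⬝ᵥ y := by
      rw [hgtxt]
      have e : gt ⬝ᵥ y = ∑ r, gt r * y r := rfl
      rw [e]
      calc mt = mt * ∑ r, y r := by rw [hy.2, mul_one]
        _ = ∑ r, mt * y r := by rw [Finset.mul_sum]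
        _ ≤ ∑ r, gt r * y r :=
          Finset.sum_le_sum fun r _ => mul_le_mul_of_nonneg_right (hgtr r) (hy.1 r)
    have hkey := UEaux_expand Q hsym (Aᵀ *ᵥ β + Pt) xt (y - xt) 1
    have e1 : xt + (1:ℝ) • (y - xt) = y := by funext r; simp
    rw [e1] at hkey
    have e2 : gt ⬝ᵥ (y - xt) = gt ⬝ᵥ y - gt ⬝ᵥ xt := dotProduct_sub _ _ _
    have hq := hpos (y - xt)
    rw [hf, hf]
    rw [hkey, ← hgt, e2]
    nlinarith
  refine ⟨⟨hxtΔ, hminxt⟩, ?_⟩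
  -- uniqueness under positive definiteness
  intro hpd y hy hminy
  set d : Fin n → ℝ := xt - y with hdd
  have hxy : f Pt xt = f Pt y := le_antisymm (hminxt y hy) (hminy xt hxtΔ)
  set gy : Fin n → ℝ := Q *ᵥ y + (Aᵀ *ᵥ β + Pt) with hgy
  set q : ℝ := d ⬝ᵥ Q *ᵥ d with hqd
  have hexp1 := UEaux_expand Q hsym (Aᵀ *ᵥ β + Pt) y d 1
  have e1 : y + (1:ℝ) • d = xt := by funext r; simp [hdd]
  rw [e1] at hexp1
  have hgyd : gy ⬝ᵥ d = -(q / 2) := by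
    have := hxy
    rw [hf, hf] at this
    rw [hexp1, ← hgy, ← hqd] at this
    linarith
  -- midpoint
  have hexp2 := UEaux_expand Q hsym (Aᵀ *ᵥ β + Pt) y d (1/2)
  rw [← hgy, ← hqd, hgyd] at hexp2
  have hzΔ : simplex (y + (1/2 : ℝ) • d) := by
    constructor
    · intro r
      have e : (y + (1/2 : ℝ) • d) r = (1/2) * y r + (1/2) * xt r := by
        simp [hdd]; ring
      rw [e]
      exact add_nonneg (mul_nonneg (by norm_num) (hy.1 r))
        (mul_nonneg (by norm_num) (hxtΔ.1 r))
    · have e : ∀ r, (y + (1/2 : ℝ) • d) r = y r + (1/2) * (xt r - y r) := by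
        intro r; simp [hdd]
      simp only [e]
      rw [Finset.sum_add_distrib, ← Finset.mul_sum, Finset.sum_sub_distrib, hy.2, hxtΔ.2]
      ring
  have hmid := hminy (y + (1/2 : ℝ) • d) hzΔ
  rw [hf, hf] at hmid
  rw [hexp2] at hmid
  have hqle : q ≤ 0 := by nlinarith
  have hd0 : d = 0 := by
    by_contra hd
    have := hpd.dotProduct_mulVec_pos hd
    have hstar : star d = d := by
      funext r; simp
    rw [hstar] at this
    rw [hqd] at hqle
    linarith
  have : xt = y := by
    have := sub_eq_zero.mp (hdd ▸ hd0)
    exact this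
  exact this.symm
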